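/- Let C be a cycle and M a complete planar matching of its edges, and let G be the tree obtained by identifying matched pairs. For any vertex c0 of C, there is an ordering of the matched pairs realizing the identifications such that each pair, at the moment of its identification, consists of two edges sharing exactly one endpoint, except for the final pair, which shares both endpoints, one of them being (the image of) c0. -/

import Mathlib

set_option linter.unusedSectionVars false
set_option maxHeartbeats 1000000

namespace MogamiPaper

/-- the matching `m` on the edges of the cycle (edge `i` joins `i` and `i+1`)
is planar: no two matched pairs cross. -/
def NonCrossing {k : ℕ} (m : Fin k → Fin k) : Prop :=
  ∀ i j : Fin k, (i : ℕ) < (m i : ℕ) → (j : ℕ) < (m j : ℕ) →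
    ¬ ((i : ℕ) < (j : ℕ) ∧ (j : ℕ) < (m i : ℕ) ∧ (m i : ℕ) < (m j : ℕ))

/-- vertex identifications performed by the first `K` matched pairs, in the
order `σ`: gluing edge `σ j` to edge `m (σ j)` (preserving orientation)
identifies `σ j + 1 ~ m (σ j)` and `m (σ j) + 1 ~ σ j`. -/
def partEqv {k : ℕ} [NeZero k] (m : Fin k → Fin k) (σ : Fin (k / 2) → Fin k)
    (K : ℕ) : Fin k → Fin k → Prop :=
  Relation.EqvGen fun u v => ∃ j : Fin (k / 2), (j : ℕ) < K ∧
    ((u = σ j + 1 ∧ v = m (σ j)) ∨ (u = m (σ j) + 1 ∧ v = σ j))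

section Aux

variable {k : ℕ} [NeZero k]

/-! ### Generated equivalences -/

def gen (m : Fin k → Fin k) (L : List (Fin k)) (u v : Fin k) : Prop :=
  ∃ a ∈ L, (u = a + 1 ∧ v = m a) ∨ (u = m a + 1 ∧ v = a)

def EStep (m : Fin k → Fin k) (E : Fin k → Fin k → Prop) (L : List (Fin k)) :
    Fin k → Fin k → Prop :=
  Relation.EqvGen fun u v => E u v ∨ gen m L u v

theorem estep_equiv (m : Fin k → Fin k) (E : Fin k → Fin k → Prop) (L : List (Fin k)) :
    Equivalence (EStep m E L) := Relation.EqvGen.is_equivalence _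

theorem estep_of_E {m : Fin k → Fin k} {E : Fin k → Fin k → Prop} {L : List (Fin k)}
    {u v : Fin k} (h : E u v) : EStep m E L u v := Relation.EqvGen.rel _ _ (Or.inl h)

theorem eqvGen_mono' {α : Type*} {r s : α → α → Prop}
    (h : ∀ u v, r u v → Relation.EqvGen s u v) {u v : α}
    (hr : Relation.EqvGen r u v) : Relation.EqvGen s u v := by
  induction hr with
  | rel u v huv => exact h u v huv
  | refl u => exact Relation.EqvGen.refl u
  | symm u v _ ih => exact Relation.EqvGen.symm _ _ ih
  | trans u v w _ _ ih1 ih2 => exact Relation.EqvGen.trans _ _ _ ih1 ih2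

theorem estep_nil {m : Fin k → Fin k} {E : Fin k → Fin k → Prop} (hE : Equivalence E)
    {u v : Fin k} : EStep m E [] u v ↔ E u v := by
  constructor
  · intro h
    have : Relation.EqvGen E u v := by
      refine eqvGen_mono' (fun u v huv => ?_) h
      rcases huv with h' | h'
      · exact Relation.EqvGen.rel _ _ h'
      · rcases h' with ⟨a, ha, _⟩; simp at ha
    rwa [hE.eqvGen_eq] at this
  · exact estep_of_E

theorem gen_mono {m : Fin k → Fin k} {L L' : List (Fin k)} (h : ∀ a ∈ L, a ∈ L')
    {u v : Fin k} (hg : gen m L u v) : gen m L' u v := by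
  obtain ⟨a, ha, hor⟩ := hg; exact ⟨a, h a ha, hor⟩

theorem estep_append {m : Fin k → Fin k} {E : Fin k → Fin k → Prop} {P Q : List (Fin k)}
    {u v : Fin k} : EStep m (EStep m E P) Q u v ↔ EStep m E (P ++ Q) u v := by
  constructor
  · intro h
    refine eqvGen_mono' (fun u v huv => ?_) h
    rcases huv with h' | h'
    · exact eqvGen_mono' (fun u v huv => Relation.EqvGen.rel _ _
        (huv.imp id (gen_mono (fun a ha => List.mem_append_left _ ha)))) h'
    · exact Relation.EqvGen.rel _ _ (Or.inr (gen_mono (fun a ha => List.mem_append_right _ ha) h'))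
  · intro h
    refine eqvGen_mono' (fun u v huv => ?_) h
    rcases huv with h' | h'
    · exact Relation.EqvGen.rel _ _ (Or.inl (estep_of_E h'))
    · obtain ⟨a, ha, hor⟩ := h'
      rcases List.mem_append.1 ha with ha' | ha'
      · exact Relation.EqvGen.rel _ _ (Or.inl (Relation.EqvGen.rel _ _ (Or.inr ⟨a, ha', hor⟩)))
      · exact Relation.EqvGen.rel _ _ (Or.inr ⟨a, ha', hor⟩)

theorem estep_single_char {m : Fin k → Fin k} {E : Fin k → Fin k → Prop}
    (hE : Equivalence E) {a : Fin k} (h1 : E (a + 1) (m a)) {u v : Fin k} :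
    EStep m E [a] u v ↔
      E u v ∨ (E u (m a + 1) ∧ E a v) ∨ (E u a ∧ E (m a + 1) v) := by
  constructor
  · intro h
    induction h with
    | rel u v huv =>
      rcases huv with h' | ⟨b, hb, hor⟩
      · exact Or.inl h'
      · simp only [List.mem_singleton] at hb
        subst hb
        rcases hor with ⟨hu, hv⟩ | ⟨hu, hv⟩
        · subst hu; subst hv; exact Or.inl h1
        · subst hu; subst hv; exact Or.inr (Or.inl ⟨hE.refl _, hE.refl _⟩)
    | refl u => exact Or.inl (hE.refl _)
    | symm u v _ ih =>
      rcases ih with h' | ⟨h1', h2'⟩ | ⟨h1', h2'⟩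
      · exact Or.inl (hE.symm h')
      · exact Or.inr (Or.inr ⟨hE.symm h2', hE.symm h1'⟩)
      · exact Or.inr (Or.inl ⟨hE.symm h2', hE.symm h1'⟩)
    | trans u w v _ _ ih1 ih2 =>
      rcases ih1 with h' | ⟨h1', h2'⟩ | ⟨h1', h2'⟩ <;>
        rcases ih2 with h'' | ⟨h1'', h2''⟩ | ⟨h1'', h2''⟩
      · exact Or.inl (hE.trans h' h'')
      · exact Or.inr (Or.inl ⟨hE.trans h' h1'', h2''⟩)
      · exact Or.inr (Or.inr ⟨hE.trans h' h1'', h2''⟩)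
      · exact Or.inr (Or.inl ⟨h1', hE.trans h2' h''⟩)
      · exact Or.inr (Or.inl ⟨h1', h2''⟩)
      · exact Or.inl (hE.trans h1' h2'')
      · exact Or.inr (Or.inr ⟨h1', hE.trans h2' h''⟩)
      · exact Or.inl (hE.trans h1' h2'')
      · exact Or.inr (Or.inr ⟨h1', h2''⟩)
  · intro h
    have hgen : EStep m E [a] (m a + 1) a :=
      Relation.EqvGen.rel _ _ (Or.inr ⟨a, List.mem_singleton_self a, Or.inr ⟨rfl, rfl⟩⟩)
    have heq := Relation.EqvGen.is_equivalence
      (fun u v => E u v ∨ gen m [a] u v)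
    rcases h with h' | ⟨h1', h2'⟩ | ⟨h1', h2'⟩
    · exact estep_of_E h'
    · exact heq.trans (estep_of_E h1') (heq.trans hgen (estep_of_E h2'))
    · exact heq.trans (estep_of_E h1') (heq.trans (heq.symm hgen) (estep_of_E h2'))

/-! ### cyclic successor in a finset -/

noncomputable def nxt (R : Finset (Fin k)) (e : Fin k) : Fin k :=
  if h : (R.filter (fun z => e < z)).Nonempty then (R.filter (fun z => e < z)).min' h
  else if h2 : R.Nonempty then R.min' h2 else e

def IsNext (R : Finset (Fin k)) (e y : Fin k) : Prop :=
  y ∈ R ∧ ((e < y ∧ ∀ z ∈ R, e < z → y ≤ z) ∨ ((∀ z ∈ R, z ≤ e) ∧ ∀ z ∈ R, y ≤ z))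

theorem isNext_nxt {R : Finset (Fin k)} {e : Fin k} (he : e ∈ R) : IsNext R e (nxt R e) := by
  unfold nxt
  by_cases h : (R.filter (fun z => e < z)).Nonempty
  · rw [dif_pos h]
    have hm := (R.filter (fun z => e < z)).min'_mem h
    rw [Finset.mem_filter] at hm
    refine ⟨hm.1, Or.inl ⟨hm.2, fun z hz hez => ?_⟩⟩
    exact Finset.min'_le _ _ (Finset.mem_filter.2 ⟨hz, hez⟩)
  · rw [dif_neg h, dif_pos ⟨e, he⟩]
    refine ⟨R.min'_mem _, Or.inr ⟨fun z hz => ?_, fun z hz => Finset.min'_le _ _ hz⟩⟩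
    by_contra hle
    exact h ⟨z, Finset.mem_filter.2 ⟨hz, lt_of_not_ge hle⟩⟩

theorem isNext_unique {R : Finset (Fin k)} {e y y' : Fin k} (h : IsNext R e y)
    (h' : IsNext R e y') : y = y' := by
  obtain ⟨hy, hc⟩ := h
  obtain ⟨hy', hc'⟩ := h'
  rcases hc with ⟨h1, h2⟩ | ⟨h1, h2⟩ <;> rcases hc' with ⟨h1', h2'⟩ | ⟨h1', h2'⟩
  · exact le_antisymm (h2 _ hy' h1') (h2' _ hy h1)
  · exact absurd (h1' _ hy) (not_le.2 h1)
  · exact absurd (h1 _ hy') (not_le.2 h1')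
  · exact le_antisymm (h2 _ hy') (h2' _ hy)

theorem nxt_mem {R : Finset (Fin k)} {e : Fin k} (he : e ∈ R) : nxt R e ∈ R :=
  (isNext_nxt he).1

theorem nxt_inj {R : Finset (Fin k)} {e e' : Fin k} (he : e ∈ R) (he' : e' ∈ R)
    (h : nxt R e = nxt R e') : e = e' := by
  obtain ⟨hy, hc⟩ := isNext_nxt he
  obtain ⟨hy', hc'⟩ := h ▸ isNext_nxt he'
  by_contra hne
  rcases hc with ⟨h1, h2⟩ | ⟨h1, h2⟩ <;> rcases hc' with ⟨h1', h2'⟩ | ⟨h1', h2'⟩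
  · rcases lt_or_gt_of_ne hne with hlt | hlt
    · exact absurd (h2 _ he' hlt) (not_le.2 h1')
    · exact absurd (h2' _ he hlt) (not_le.2 h1)
  · exact absurd (h2' _ he) (not_le.2 h1)
  · exact absurd (h2 _ he') (not_le.2 h1')
  · exact hne (le_antisymm (h1' _ he) (h1 _ he'))

theorem nxt_eq_self {R : Finset (Fin k)} {e : Fin k} (he : e ∈ R)
    (h : nxt R e = e) : ∀ z ∈ R, z = e := by
  obtain ⟨hy, hc⟩ := h ▸ isNext_nxt he
  rcases hc with ⟨h1, _⟩ | ⟨h1, h2⟩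
  · exact absurd h1 (lt_irrefl e)
  · exact fun z hz => le_antisymm (h1 _ hz) (h2 _ hz)

theorem nxt_swap {R : Finset (Fin k)} {a b : Fin k} (ha : a ∈ R) (hb : b ∈ R)
    (hab : a ≠ b) (h1 : nxt R a = b) (h2 : nxt R b = a) : ∀ z ∈ R, z = a ∨ z = b := by
  obtain ⟨_, hc⟩ := h1 ▸ isNext_nxt ha
  obtain ⟨_, hc'⟩ := h2 ▸ isNext_nxt hb
  intro c hc''
  rcases hc with ⟨g1, g2⟩ | ⟨g1, g2⟩ <;> rcases hc' with ⟨g1', g2'⟩ | ⟨g1', g2'⟩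
  · exact absurd (g1.trans g1') (lt_irrefl _)
  · rcases eq_or_ne c a with h | h
    · exact Or.inl h
    · exact Or.inr (le_antisymm (g1' _ hc'') (g2 _ hc'' (lt_of_le_of_ne (g2' _ hc'') (Ne.symm h))))
  · rcases eq_or_ne c b with h | h
    · exact Or.inr h
    · exact Or.inl (le_antisymm (g1 _ hc'') (g2' _ hc'' (lt_of_le_of_ne (g2 _ hc'') (Ne.symm h))))
  · exact absurd (le_antisymm (g1' _ ha) (g1 _ hb)) hab

theorem nxt_pair {a b : Fin k} (hab : a ≠ b) : nxt ({a, b} : Finset (Fin k)) b = a := by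
  have hbm : b ∈ ({a, b} : Finset (Fin k)) := by simp
  have ham : a ∈ ({a, b} : Finset (Fin k)) := by simp
  have hmem : ∀ z ∈ ({a, b} : Finset (Fin k)), z = a ∨ z = b := by simp
  refine isNext_unique (isNext_nxt hbm) ⟨ham, ?_⟩
  rcases lt_or_gt_of_ne hab with h | h
  · refine Or.inr ⟨fun z hz => ?_, fun z hz => ?_⟩
    · rcases hmem z hz with rfl | rfl
      · exact le_of_lt h
      · exact le_refl _
    · rcases hmem z hz with rfl | rfl
      · exact le_refl _
      · exact le_of_lt h
  · refine Or.inl ⟨h, fun z hz hbz => ?_⟩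
    rcases hmem z hz with rfl | rfl
    · exact le_refl _
    · exact absurd hbz (lt_irrefl _)

theorem nxt_erase_of_ne {R : Finset (Fin k)} {e x : Fin k} (he : e ∈ R) (hex : e ≠ x)
    (h : nxt R e ≠ x) : nxt (R.erase x) e = nxt R e := by
  refine isNext_unique (isNext_nxt (Finset.mem_erase.2 ⟨hex, he⟩)) ?_
  obtain ⟨hy, hc⟩ := isNext_nxt he
  refine ⟨Finset.mem_erase.2 ⟨h, hy⟩, ?_⟩
  rcases hc with ⟨h1, h2⟩ | ⟨h1, h2⟩
  · exact Or.inl ⟨h1, fun z hz => h2 z (Finset.mem_of_mem_erase hz)⟩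
  · exact Or.inr ⟨fun z hz => h1 z (Finset.mem_of_mem_erase hz),
      fun z hz => h2 z (Finset.mem_of_mem_erase hz)⟩

theorem nxt_erase_of_eq {R : Finset (Fin k)} {e x : Fin k} (he : e ∈ R) (hex : e ≠ x)
    (h : nxt R e = x) : nxt (R.erase x) e = nxt R x := by
  have hx : x ∈ R := h ▸ nxt_mem he
  have hyx : nxt R x ≠ x := by
    intro hh
    exact hex (nxt_eq_self hx hh e he)
  refine isNext_unique (isNext_nxt (Finset.mem_erase.2 ⟨hex, he⟩)) ?_
  obtain ⟨hy, hc⟩ := h ▸ isNext_nxt he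
  obtain ⟨hy', hc'⟩ := isNext_nxt hx
  refine ⟨Finset.mem_erase.2 ⟨hyx, hy'⟩, ?_⟩
  rcases hc with ⟨h1, h2⟩ | ⟨h1, h2⟩
  · rcases hc' with ⟨h1', h2'⟩ | ⟨h1', h2'⟩
    · refine Or.inl ⟨h1.trans h1', fun z hz hez => ?_⟩
      obtain ⟨hzx, hzR⟩ := Finset.mem_erase.1 hz
      rcases lt_or_ge x z with hxz | hxz
      · exact h2' z hzR hxz
      · exact absurd (lt_of_le_of_ne hxz hzx) (not_lt.2 (h2 z hzR hez))
    · refine Or.inr ⟨fun z hz => ?_, fun z hz => h2' z (Finset.mem_of_mem_erase hz)⟩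
      obtain ⟨hzx, hzR⟩ := Finset.mem_erase.1 hz
      by_contra hle
      exact hzx (le_antisymm (h1' z hzR) (h2 z hzR (lt_of_not_ge hle)))
  · rcases hc' with ⟨h1', h2'⟩ | ⟨h1', h2'⟩
    · refine Or.inr ⟨fun z hz => h1 z (Finset.mem_of_mem_erase hz), fun z hz => ?_⟩
      obtain ⟨hzx, hzR⟩ := Finset.mem_erase.1 hz
      exact h2' z hzR (lt_of_le_of_ne (h2 z hzR) (Ne.symm hzx))
    · exact absurd (le_antisymm (h1' e he) (h2 e he)) hex

theorem nxt_univ (e : Fin k) : nxt (Finset.univ : Finset (Fin k)) e = e + 1 := by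
  refine isNext_unique (isNext_nxt (Finset.mem_univ e)) ?_
  refine ⟨Finset.mem_univ _, ?_⟩
  rcases Nat.lt_or_ge ((e : ℕ) + 1) k with h | h
  · refine Or.inl ⟨?_, ?_⟩
    · have : ((e + 1 : Fin k) : ℕ) = (e : ℕ) + 1 := by
        simp [Fin.add_def, Nat.mod_eq_of_lt h]
      simp only [Fin.lt_def, this]; omega
    · intro z _ hez
      have : ((e + 1 : Fin k) : ℕ) = (e : ℕ) + 1 := by
        simp [Fin.add_def, Nat.mod_eq_of_lt h]
      simp only [Fin.le_def, this]
      exact hez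
  · have he : (e : ℕ) = k - 1 := by have := e.isLt; omega
    have : ((e + 1 : Fin k) : ℕ) = 0 := by
      simp [Fin.add_def, he]
      have hk := Nat.pos_of_ne_zero (NeZero.ne k)
      have : k - 1 + 1 = k := by omega
      simp [this]
    refine Or.inr ⟨fun z _ => ?_, fun z _ => ?_⟩
    · simp only [Fin.le_def, he]; have := z.isLt; omega
    · simp only [Fin.le_def, this]; omega

/-! ### val of +1 -/

theorem fin_val_add_one {c : ℕ} [NeZero c] (t : Fin c) (h : (t : ℕ) + 1 < c) :
    ((t + 1 : Fin c) : ℕ) = (t : ℕ) + 1 := by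
  rw [Fin.val_add, Fin.val_one']
  have hc : 1 < c := by omega
  rw [Nat.mod_eq_of_lt hc, Nat.mod_eq_of_lt h]

theorem fin_val_add_one_last {c : ℕ} [NeZero c] (t : Fin c) (h : (t : ℕ) + 1 = c) :
    ((t + 1 : Fin c) : ℕ) = 0 := by
  rw [Fin.val_add, Fin.val_one']
  rcases eq_or_lt_of_le (show 1 ≤ c by omega) with hc | hc
  · have ht : (t : ℕ) = 0 := by omega
    rw [ht, ← hc]
  · rw [Nat.mod_eq_of_lt hc, h, Nat.mod_self]

/-! ### innermost pairs (ears) -/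

theorem innermost {c : ℕ} (m' : Fin c → Fin c) (hinv : Function.Involutive m')
    (hfix : ∀ i, m' i ≠ i) (hpl : NonCrossing m') :
    ∀ d (i : Fin c), (i : ℕ) < (m' i : ℕ) → (m' i : ℕ) - (i : ℕ) ≤ d →
      ∃ t : Fin c, (i : ℕ) ≤ (t : ℕ) ∧ (m' t : ℕ) = (t : ℕ) + 1 ∧ (m' t : ℕ) ≤ (m' i : ℕ) := by
  have hinj : Function.Injective m' := hinv.injective
  intro d
  induction d with
  | zero => intro i hi hd; omega
  | succ d IH =>
    intro i hi hd
    by_cases h1 : (m' i : ℕ) = (i : ℕ) + 1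
    · exact ⟨i, le_refl _, h1, le_refl _⟩
    · have hj : (i : ℕ) + 1 < c := lt_of_le_of_lt hi (m' i).isLt
      set j : Fin c := ⟨(i : ℕ) + 1, hj⟩ with hjdef
      have hji : (j : ℕ) = (i : ℕ) + 1 := rfl
      have hne : m' j ≠ j := hfix j
      have hmm : (m' (m' j) : ℕ) = (j : ℕ) := congrArg Fin.val (hinv j)
      have hmji : (m' j : ℕ) ≠ (i : ℕ) := by
        intro hh
        have h3 : m' j = i := Fin.ext hh
        have h4 := congrArg m' h3
        rw [hinv j] at h4
        exact h1 (by rw [← h4])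
      rcases Nat.lt_trichotomy (m' j : ℕ) (j : ℕ) with hlt | heq | hgt
      · exfalso
        have h2 : ((m' j : Fin c) : ℕ) < (m' (m' j) : ℕ) := by omega
        exact hpl (m' j) i h2 hi ⟨by omega, by omega, by omega⟩
      · exact absurd (Fin.ext heq) hne
      · have hne2 : (m' j : ℕ) ≠ (m' i : ℕ) := by
          intro hh
          have := congrArg Fin.val (hinj (Fin.ext hh))
          omega
        have hmlt : (m' j : ℕ) < (m' i : ℕ) := by
          have := hpl i j hi hgt
          omega
        obtain ⟨t, ht1, ht2, ht3⟩ := IH j hgt (by omega)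
        exact ⟨t, by omega, ht2, by omega⟩

theorem two_ears_fin {c : ℕ} [NeZero c] (hc : 4 ≤ c) (m' : Fin c → Fin c)
    (hinv : Function.Involutive m') (hfix : ∀ i, m' i ≠ i) (hpl : NonCrossing m') :
    ∃ t t' : Fin c, m' t ≠ m' t' ∧ m' t = t + 1 ∧ m' t' = t' + 1 := by
  have hinj : Function.Injective m' := hinv.injective
  have hc0 : 0 < c := by omega
  have finadd : ∀ t : Fin c, (m' t : ℕ) = (t : ℕ) + 1 → m' t = t + 1 := by
    intro t h
    have h2 : (t : ℕ) + 1 < c := h ▸ (m' t).isLt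
    exact Fin.ext (by rw [h, fin_val_add_one t h2])
  have hz : ((⟨0, hc0⟩ : Fin c) : ℕ) = 0 := rfl
  set z : Fin c := ⟨0, hc0⟩
  have hmmz : (m' (m' z) : ℕ) = 0 := congrArg Fin.val (hinv z)
  have hb0 : 0 < (m' z : ℕ) := by
    rcases Nat.eq_zero_or_pos (m' z : ℕ) with h | h
    · exact absurd (Fin.ext (h.trans hz.symm)) (hfix z)
    · exact h
  have hb0le : (m' z : ℕ) ≤ c - 1 := by have := (m' z).isLt; omega
  rcases eq_or_lt_of_le hb0le with hb | hb
  · obtain ⟨t, ht1, ht2, ht3⟩ := innermost m' hinv hfix hpl c z (by omega) (by omega)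
    refine ⟨t, m' z, ?_, finadd t ht2, ?_⟩
    · intro hh
      have h0 := congrArg Fin.val hh
      omega
    · refine Fin.ext ?_
      rw [hmmz, fin_val_add_one_last (m' z) (by omega)]
  · obtain ⟨t1, h11, h12, h13⟩ := innermost m' hinv hfix hpl c z (by omega) (by omega)
    have hclast : c - 1 < c := by omega
    have hev : ((⟨c - 1, hclast⟩ : Fin c) : ℕ) = c - 1 := rfl
    set e : Fin c := ⟨c - 1, hclast⟩
    have hmme : (m' (m' e) : ℕ) = c - 1 := (congrArg Fin.val (hinv e)).trans hev
    have hc1lt : (m' e : ℕ) < c - 1 := by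
      have h1 : (m' e : ℕ) < c := (m' e).isLt
      have h2 : (m' e : ℕ) ≠ c - 1 := fun hh => hfix e (Fin.ext (hh.trans hev.symm))
      omega
    have hc1ne0 : (m' e : ℕ) ≠ 0 := by
      intro hh
      have h3 : m' e = z := Fin.ext (hh.trans hz.symm)
      have h4 := congrArg Fin.val (congrArg m' h3)
      rw [hinv e] at h4
      omega
    have hc1gt : (m' z : ℕ) < (m' e : ℕ) := by
      have hnee : (m' e : ℕ) ≠ (m' z : ℕ) := by
        intro hh
        have := congrArg Fin.val (hinj (Fin.ext hh))
        omega
      rcases Nat.lt_or_ge (m' e : ℕ) (m' z : ℕ) with h | h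
      · exact absurd ⟨by omega, by omega, by omega⟩ (hpl z (m' e) (by omega) (by omega))
      · omega
    obtain ⟨t2, h21, h22, h23⟩ := innermost m' hinv hfix hpl c (m' e) (by omega) (by omega)
    refine ⟨t1, t2, ?_, finadd t1 h12, finadd t2 h22⟩
    intro hh
    have := congrArg Fin.val (hinj hh)
    omega

theorem nxt_orderIso {R : Finset (Fin k)} {c : ℕ} [NeZero c] (hR : R.card = c) (i : Fin c) :
    nxt R ((R.orderIsoOfFin hR i : Fin k)) = ((R.orderIsoOfFin hR (i + 1) : Fin k)) := by
  set f : Fin c → Fin k := fun j => ((R.orderIsoOfFin hR j : Fin k)) with hf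
  have hmem : ∀ j, f j ∈ R := fun j => (R.orderIsoOfFin hR j).2
  have hlt : ∀ a b : Fin c, f a < f b ↔ a < b := fun a b =>
    Subtype.coe_lt_coe.trans (OrderIso.lt_iff_lt _)
  have hle : ∀ a b : Fin c, f a ≤ f b ↔ a ≤ b := fun a b =>
    Subtype.coe_le_coe.trans (OrderIso.le_iff_le _)
  have hsurj : ∀ z ∈ R, ∃ j, f j = z := fun z hz =>
    ⟨(R.orderIsoOfFin hR).symm ⟨z, hz⟩, by rw [hf]; simp only [OrderIso.apply_symm_apply]⟩
  refine isNext_unique (isNext_nxt (hmem i)) ⟨hmem (i + 1), ?_⟩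
  rcases Nat.lt_or_ge ((i : ℕ) + 1) c with h | h
  · have hiv : ((i + 1 : Fin c) : ℕ) = (i : ℕ) + 1 := fin_val_add_one i h
    refine Or.inl ⟨(hlt i (i + 1)).2 (by rw [Fin.lt_def, hiv]; omega), ?_⟩
    intro z hz hz2
    obtain ⟨j, rfl⟩ := hsurj z hz
    have hij : i < j := (hlt i j).1 hz2
    exact (hle (i + 1) j).2 (by rw [Fin.le_def, hiv]; exact Fin.lt_def.1 hij)
  · have hic : (i : ℕ) + 1 = c := by have := i.isLt; omega
    have hiv : ((i + 1 : Fin c) : ℕ) = 0 := fin_val_add_one_last i hic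
    refine Or.inr ⟨fun z hz => ?_, fun z hz => ?_⟩
    · obtain ⟨j, rfl⟩ := hsurj z hz
      exact (hle j i).2 (by rw [Fin.le_def]; have := j.isLt; omega)
    · obtain ⟨j, rfl⟩ := hsurj z hz
      exact (hle (i + 1) j).2 (by rw [Fin.le_def, hiv]; omega)

/-! ### main recursion -/

theorem main (m : Fin k → Fin k) (hinv : Function.Involutive m) (hfix : ∀ i, m i ≠ i)
    (hpl : NonCrossing m) (c0 : Fin k) :
    ∀ n : ℕ, 1 ≤ n → ∀ R : Finset (Fin k), R.card = 2 * n → (∀ a ∈ R, m a ∈ R) →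
    ∀ E : Fin k → Fin k → Prop, Equivalence E →
    (∀ e ∈ R, ∀ e' ∈ R, E e e' → e = e') →
    (∀ e ∈ R, E (nxt R e) (e + 1)) →
    (∃ e ∈ R, E c0 e) →
    ∃ L : List (Fin k), L.length = n ∧ (∀ a ∈ L, a ∈ R) ∧
      (∀ x ∈ R, ∃ a ∈ L, a = x ∨ m a = x) ∧
      List.Pairwise (fun x y => x ≠ y ∧ m x ≠ y ∧ x ≠ m y) L ∧
      (∀ P b Q, L = P ++ b :: Q →
        (Q ≠ [] → Xor' (EStep m E P b (m b + 1)) (EStep m E P (b + 1) (m b))) ∧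
        (Q = [] → EStep m E P b (m b + 1) ∧ EStep m E P (b + 1) (m b) ∧
          (EStep m E P c0 b ∨ EStep m E P c0 (b + 1)))) := by
  intro n
  induction n with
  | zero => omega
  | succ n IH =>
    intro _ R hcard hmR E hE hA hB hC
    by_cases hn : n = 0
    · -- base case : two edges left
      subst hn
      obtain ⟨a, ha⟩ : R.Nonempty := Finset.card_pos.1 (by omega)
      have hb : m a ∈ R := hmR a ha
      have hba : m a ≠ a := hfix a
      have hR2 : R = {a, m a} := by
        refine (Finset.eq_of_subset_of_card_le ?_ ?_).symm
        · intro z hz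
          rcases Finset.mem_insert.1 hz with rfl | hz'
          · exact ha
          · rwa [Finset.mem_singleton.1 hz']
        · rw [hcard, Finset.card_insert_of_notMem (by simp [Ne.symm hba]),
            Finset.card_singleton]
      have hnxta : nxt R a = m a := by
        rw [hR2, Finset.pair_comm]
        exact nxt_pair hba
      have hnxtb : nxt R (m a) = a := by
        rw [hR2]
        exact nxt_pair (fun h => hba h.symm)
      have hBa : E (m a) (a + 1) := by have := hB a ha; rwa [hnxta] at this
      have hBb : E a (m a + 1) := by have := hB (m a) hb; rwa [hnxtb] at this
      refine ⟨[a], rfl, by simpa using ha, ?_, by simp, ?_⟩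
      · intro x hx
        rw [hR2] at hx
        rcases Finset.mem_insert.1 hx with hxa | hx'
        · exact ⟨a, by simp, Or.inl hxa.symm⟩
        · exact ⟨a, by simp, Or.inr (Finset.mem_singleton.1 hx').symm⟩
      · intro P b0 Q hL
        rcases P with _ | ⟨p, P'⟩
        · simp only [List.nil_append] at hL
          injection hL with h1 h2
          subst h1; subst h2
          refine ⟨fun h => absurd rfl h, fun _ => ?_⟩
          refine ⟨(estep_nil hE).mpr hBb, (estep_nil hE).mpr (hE.symm hBa), ?_⟩
          obtain ⟨e, he, hce⟩ := hC
          rw [hR2] at he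
          rcases Finset.mem_insert.1 he with rfl | he'
          · exact Or.inl ((estep_nil hE).mpr hce)
          · rw [Finset.mem_singleton.1 he'] at hce
            exact Or.inr ((estep_nil hE).mpr (hE.trans hce hBa))
        · exfalso
          have := congrArg List.length hL
          simp at this
    · -- inductive step
      have hcard4 : 4 ≤ R.card := by omega
      haveI : NeZero (2 * (n + 1)) := ⟨by omega⟩
      set f : Fin (2 * (n + 1)) → Fin k := fun i => ((R.orderIsoOfFin hcard i : Fin k)) with hf
      have hmemf : ∀ i, f i ∈ R := fun i => (R.orderIsoOfFin hcard i).2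
      have hfinj : Function.Injective f := fun i j h =>
        (R.orderIsoOfFin hcard).injective (Subtype.ext h)
      set m' : Fin (2 * (n + 1)) → Fin (2 * (n + 1)) :=
        fun i => (R.orderIsoOfFin hcard).symm ⟨m (f i), hmR _ (hmemf i)⟩ with hm'
      have hfm : ∀ i, f (m' i) = m (f i) := fun i => by
        rw [hf, hm']
        simp only [OrderIso.apply_symm_apply]
        rfl
      have hm'inv : Function.Involutive m' := fun i => hfinj (by rw [hfm, hfm, hinv])
      have hm'fix : ∀ i, m' i ≠ i := fun i h => hfix (f i) (by rw [← hfm, h])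
      have hlt : ∀ a b : Fin (2 * (n + 1)), f a < f b ↔ a < b := fun a b =>
        Subtype.coe_lt_coe.trans (OrderIso.lt_iff_lt _)
      have hv : ∀ a b : Fin (2 * (n + 1)), (a : ℕ) < (b : ℕ) ↔ ((f a) : ℕ) < ((f b) : ℕ) :=
        fun a b => by rw [← Fin.lt_def, ← hlt a b, Fin.lt_def]
      have hm'pl : NonCrossing m' := by
        intro i j h1 h2 ⟨g1, g2, g3⟩
        refine hpl (f i) (f j) ?_ ?_ ⟨?_, ?_, ?_⟩
        · rw [← hfm i]; exact (hv _ _).1 h1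
        · rw [← hfm j]; exact (hv _ _).1 h2
        · exact (hv _ _).1 g1
        · rw [← hfm i]; exact (hv _ _).1 g2
        · rw [← hfm i, ← hfm j]; exact (hv _ _).1 g3
      obtain ⟨t, t', hne, ht, ht'⟩ := two_ears_fin (by omega) m' hm'inv hm'fix hm'pl
      have hear : ∀ s : Fin (2 * (n + 1)), m' s = s + 1 → nxt R (f s) = m (f s) := by
        intro s hs
        rw [← hfm s, hs]
        exact nxt_orderIso hcard s
      have hb12 : m (f t) ≠ m (f t') := by
        rw [← hfm t, ← hfm t']
        exact fun h => hne (hfinj h)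
      have hchoice : ∃ a, a ∈ R ∧ nxt R a = m a ∧ ¬ E c0 (m a) := by
        by_cases hch : E c0 (m (f t))
        · refine ⟨f t', hmemf t', hear t' ht', fun h2 => hb12 ?_⟩
          exact hA _ (hmR _ (hmemf t)) _ (hmR _ (hmemf t')) (hE.trans (hE.symm hch) h2)
        · exact ⟨f t, hmemf t, hear t ht, hch⟩
      obtain ⟨a, ha, hnxta, hc0b⟩ := hchoice
      have hb : m a ∈ R := hmR a ha
      have hba : m a ≠ a := hfix a
      set R' : Finset (Fin k) := (R.erase a).erase (m a) with hR'
      have hmemR' : ∀ x, x ∈ R' ↔ x ∈ R ∧ x ≠ a ∧ x ≠ m a := by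
        intro x
        rw [hR', Finset.mem_erase, Finset.mem_erase]
        tauto
      have hcard' : R'.card = 2 * n := by
        rw [hR', Finset.card_erase_of_mem (Finset.mem_erase.2 ⟨hba, hb⟩),
          Finset.card_erase_of_mem ha, hcard]
        omega
      have hmR' : ∀ x ∈ R', m x ∈ R' := by
        intro x hx
        obtain ⟨hx1, hx2, hx3⟩ := (hmemR' x).1 hx
        refine (hmemR' (m x)).2 ⟨hmR x hx1, fun h => hx3 ?_, fun h => hx2 ?_⟩
        · rw [← hinv x, h]
        · exact hinv.injective h
      have hE' : Equivalence (EStep m E [a]) := estep_equiv m E [a]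
      have hEsub : ∀ u v, E u v → EStep m E [a] u v := fun _ _ h => estep_of_E h
      have h1 : E (a + 1) (m a) := hE.symm (hnxta ▸ hB a ha)
      have hchar : ∀ u v, EStep m E [a] u v ↔
          E u v ∨ (E u (m a + 1) ∧ E a v) ∨ (E u a ∧ E (m a + 1) v) :=
        fun u v => estep_single_char hE h1
      have hgen : EStep m E [a] (m a + 1) a :=
        Relation.EqvGen.rel _ _ (Or.inr ⟨a, List.mem_singleton_self a, Or.inr ⟨rfl, rfl⟩⟩)
      have hwa : nxt R (m a) ≠ a := by
        intro h
        have hsub : ∀ z ∈ R, z = a ∨ z = m a := nxt_swap ha hb (Ne.symm hba) hnxta h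
        have : R ⊆ {a, m a} := fun z hz => by
          rcases hsub z hz with rfl | rfl
          · simp
          · simp
        have := Finset.card_le_card this
        have h2 : ({a, m a} : Finset (Fin k)).card ≤ 2 := Finset.card_insert_le _ _ |>.trans
          (by simp)
        omega
      have hwb : nxt R (m a) ≠ m a := by
        intro h
        exact (Ne.symm hba) (nxt_eq_self hb h a ha)
      have hwR' : nxt R (m a) ∈ R' := (hmemR' _).2 ⟨nxt_mem hb, hwa, hwb⟩
      have hBb : E (nxt R (m a)) (m a + 1) := hB (m a) hb
      -- invariants
      have hA' : ∀ e ∈ R', ∀ e' ∈ R', EStep m E [a] e e' → e = e' := by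
        intro e he e' he' hee
        obtain ⟨he1, he2, he3⟩ := (hmemR' e).1 he
        obtain ⟨he1', he2', he3'⟩ := (hmemR' e').1 he'
        rcases (hchar e e').1 hee with h' | ⟨g1, g2⟩ | ⟨g1, g2⟩
        · exact hA e he1 e' he1' h'
        · exact absurd (hA a ha e' he1' g2).symm he2'
        · exact absurd (hA e he1 a ha g1) he2
      have hB' : ∀ e ∈ R', EStep m E [a] (nxt R' e) (e + 1) := by
        intro e he
        obtain ⟨he1, he2, he3⟩ := (hmemR' e).1 he
        by_cases hcase : nxt R e = a
        · have s1 : nxt (R.erase a) e = nxt R a := nxt_erase_of_eq he1 he2 hcase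
          have s2 : nxt R' e = nxt (R.erase a) (m a) := by
            rw [hR']
            exact nxt_erase_of_eq (Finset.mem_erase.2 ⟨he2, he1⟩) he3 (s1.trans hnxta)
          have s3 : nxt (R.erase a) (m a) = nxt R (m a) := nxt_erase_of_ne hb hba hwa
          rw [s2, s3]
          refine hE'.trans (hEsub _ _ hBb) (hE'.trans hgen (hEsub _ _ ?_))
          rw [← hcase]
          exact hB e he1
        · have hcb : nxt R e ≠ m a := by
            intro h
            exact he2 (nxt_inj he1 ha (h.trans hnxta.symm))
          have s1 : nxt (R.erase a) e = nxt R e := nxt_erase_of_ne he1 he2 hcase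
          have s2 : nxt R' e = nxt (R.erase a) e := by
            rw [hR']
            exact nxt_erase_of_ne (Finset.mem_erase.2 ⟨he2, he1⟩) he3 (s1.trans_ne hcb)
          rw [s2, s1]
          exact hEsub _ _ (hB e he1)
      have hC' : ∃ e ∈ R', EStep m E [a] c0 e := by
        obtain ⟨e, he, hce⟩ := hC
        by_cases he1 : e = a
        · have hce' : E c0 a := he1 ▸ hce
          refine ⟨nxt R (m a), hwR', ?_⟩
          exact hE'.trans (hEsub _ _ hce')
            (hE'.trans (hE'.symm hgen) (hEsub _ _ (hE.symm hBb)))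
        · by_cases he2 : e = m a
          · subst he2
            exact absurd hce hc0b
          · exact ⟨e, (hmemR' e).2 ⟨he, he1, he2⟩, hEsub _ _ hce⟩
      obtain ⟨L', hlen', hmem', hcov', hpw', hstep'⟩ :=
        IH (by omega) R' hcard' hmR' (EStep m E [a]) hE' hA' hB' hC'
      refine ⟨a :: L', by simp [hlen'], ?_, ?_, ?_, ?_⟩
      · intro x hx
        rcases List.mem_cons.1 hx with rfl | hx'
        · exact ha
        · exact ((hmemR' x).1 (hmem' x hx')).1
      · intro x hx
        by_cases hxa : x = a
        · exact ⟨a, List.mem_cons_self, Or.inl hxa.symm⟩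
        · by_cases hxb : x = m a
          · exact ⟨a, List.mem_cons_self, Or.inr hxb.symm⟩
          · obtain ⟨a', ha', h'⟩ := hcov' x ((hmemR' x).2 ⟨hx, hxa, hxb⟩)
            exact ⟨a', List.mem_cons_of_mem _ ha', h'⟩
      · refine List.pairwise_cons.2 ⟨fun y hy => ?_, hpw'⟩
        obtain ⟨hy1, hy2, hy3⟩ := (hmemR' y).1 (hmem' y hy)
        obtain ⟨hmy1, hmy2, hmy3⟩ := (hmemR' (m y)).1 (hmR' y (hmem' y hy))
        exact ⟨Ne.symm hy2, Ne.symm hy3, Ne.symm hmy2⟩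
      · intro P0 b0 Q0 hL0
        rcases P0 with _ | ⟨p, P0'⟩
        · simp only [List.nil_append] at hL0
          injection hL0 with g1 g2
          subst g1
          refine ⟨fun _ => ?_, fun hQ => ?_⟩
          · refine Or.inr ⟨(estep_nil hE).mpr h1, fun h => ?_⟩
            have h' := (estep_nil hE).mp h
            have h2 : E a (nxt R (m a)) := hE.trans h' (hE.symm hBb)
            exact hwa (hA _ (nxt_mem hb) _ ha (hE.symm h2))
          · exfalso
            rw [g2, hQ] at hlen'
            simp at hlen'
            omega
        · injection hL0 with g1 g2
          subst g1
          obtain ⟨s1, s2⟩ := hstep' P0' b0 Q0 g2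
          have hconv : ∀ u v : Fin k,
              EStep m (EStep m E [a]) P0' u v ↔ EStep m E (a :: P0') u v := by
            intro u v
            exact estep_append
          refine ⟨fun hQ => ?_, fun hQ => ?_⟩
          · rcases s1 hQ with ⟨hp, hq⟩ | ⟨hp, hq⟩
            · exact Or.inl ⟨(hconv _ _).1 hp, fun h => hq ((hconv _ _).2 h)⟩
            · exact Or.inr ⟨(hconv _ _).1 hp, fun h => hq ((hconv _ _).2 h)⟩
          · obtain ⟨g3, g4, g5⟩ := s2 hQ
            exact ⟨(hconv _ _).1 g3, (hconv _ _).1 g4,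
              g5.imp ((hconv _ _).1) ((hconv _ _).1)⟩

end Aux

/-- for a complete planar matching of the edges of a cycle and any
vertex `c0`, the matched pairs can be ordered so that each identification, at
the moment it is performed, glues two edges sharing exactly one endpoint --
except the last one, which glues two edges sharing both endpoints, one of them
being (the image of) `c0`. -/
theorem stmt5 (k : ℕ) [NeZero k] (hk : Even k)
    (m : Fin k → Fin k) (hinv : Function.Involutive m) (hfix : ∀ i, m i ≠ i)
    (hpl : NonCrossing m) (c0 : Fin k) :
    ∃ σ : Fin (k / 2) → Fin k,
      (∀ x : Fin k, ∃ j, σ j = x ∨ m (σ j) = x) ∧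
      (∀ j j', σ j = σ j' ∨ σ j = m (σ j') → j = j') ∧
      (∀ j : Fin (k / 2), (j : ℕ) + 1 < k / 2 →
        Xor' (partEqv m σ (j : ℕ) (σ j) (m (σ j) + 1))
             (partEqv m σ (j : ℕ) (σ j + 1) (m (σ j)))) ∧
      (∀ j : Fin (k / 2), (j : ℕ) + 1 = k / 2 →
        partEqv m σ (j : ℕ) (σ j) (m (σ j) + 1) ∧
        partEqv m σ (j : ℕ) (σ j + 1) (m (σ j)) ∧
        (partEqv m σ (j : ℕ) c0 (σ j) ∨ partEqv m σ (j : ℕ) c0 (σ j + 1))) := by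
  have hk1 : k ≠ 0 := NeZero.ne k
  have hk2 : k = 2 * (k / 2) := by
    obtain ⟨r, hr⟩ := hk
    omega
  have hn1 : 1 ≤ k / 2 := by omega
  have hcardu : (Finset.univ : Finset (Fin k)).card = 2 * (k / 2) := by
    rw [Finset.card_univ, Fintype.card_fin]
    omega
  obtain ⟨L, hlen, hLmem, hcov, hpw, hstep⟩ :=
    main m hinv hfix hpl c0 (k / 2) hn1 Finset.univ hcardu (fun a _ => Finset.mem_univ _)
      Eq eq_equivalence (fun e _ e' _ h => h) (fun e _ => nxt_univ e)
      ⟨c0, Finset.mem_univ _, rfl⟩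
  have hjlen : ∀ j : Fin (k / 2), (j : ℕ) < L.length := fun j => by
    rw [hlen]; exact j.2
  set σ : Fin (k / 2) → Fin k := fun j => L.get (Fin.cast hlen.symm j) with hσ
  have hσel : ∀ (i : ℕ) (hik : i < k / 2) (hiL : i < L.length),
      σ ⟨i, hik⟩ = L[i]'hiL := fun i hik hiL => rfl
  have hpe : ∀ K : ℕ, K ≤ k / 2 → ∀ u v : Fin k,
      partEqv m σ K u v ↔ EStep m Eq (L.take K) u v := by
    intro K hK u v
    constructor
    · intro h
      refine eqvGen_mono' (fun u v huv => ?_) h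
      obtain ⟨j, hjK, hor⟩ := huv
      refine Relation.EqvGen.rel _ _ (Or.inr ⟨σ j, ?_, hor⟩)
      have h1 : (j : ℕ) < (L.take K).length := by
        rw [List.length_take]
        exact lt_min hjK (hjlen j)
      have h2 : (L.take K)[(j : ℕ)]'h1 = L[(j : ℕ)]'(hjlen j) := List.getElem_take
      have h3 : σ j = L[(j : ℕ)]'(hjlen j) := rfl
      rw [h3, ← h2]
      exact List.getElem_mem h1
    · intro h
      refine eqvGen_mono' (fun u v huv => ?_) h
      rcases huv with rfl | ⟨a, haT, hor⟩
      · exact Relation.EqvGen.refl _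
      · obtain ⟨i, hi, hEl⟩ := List.getElem_of_mem haT
        have hmin := hi
        rw [List.length_take] at hmin
        obtain ⟨hiK, hil⟩ := Nat.lt_min.1 hmin
        have hik2 : i < k / 2 := by rw [hlen] at hil; exact hil
        have hEl' : σ ⟨i, hik2⟩ = a := by
          rw [hσel i hik2 hil, ← hEl]
          exact (List.getElem_take).symm
        refine Relation.EqvGen.rel _ _ ⟨⟨i, hik2⟩, hiK, ?_⟩
        rw [hEl']
        exact hor
  refine ⟨σ, ?_, ?_, ?_, ?_⟩
  · intro x
    obtain ⟨a, haL, hax⟩ := hcov x (Finset.mem_univ x)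
    obtain ⟨i, hi, hEl⟩ := List.getElem_of_mem haL
    have hik2 : i < k / 2 := by rw [hlen] at hi; exact hi
    refine ⟨⟨i, hik2⟩, ?_⟩
    rw [hσel i hik2 hi, hEl]
    exact hax
  · intro j j' hor
    by_contra hne
    have hvne : (j : ℕ) ≠ (j' : ℕ) := fun h => hne (Fin.ext h)
    have hpg := List.pairwise_iff_getElem.1 hpw
    have hgj : ∀ j : Fin (k / 2), σ j = L[(j : ℕ)]'(hjlen j) := fun j => rfl
    rcases Nat.lt_or_ge (j : ℕ) (j' : ℕ) with h | h
    · obtain ⟨q1, q2, q3⟩ := hpg (j : ℕ) (j' : ℕ) (hjlen j) (hjlen j') h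
      rcases hor with h' | h'
      · exact q1 (by rw [← hgj j, ← hgj j']; exact h')
      · exact q3 (by rw [← hgj j, ← hgj j']; exact h')
    · have h2 : (j' : ℕ) < (j : ℕ) := by omega
      obtain ⟨q1, q2, q3⟩ := hpg (j' : ℕ) (j : ℕ) (hjlen j') (hjlen j) h2
      rcases hor with h' | h'
      · exact q1 (by rw [← hgj j, ← hgj j']; exact h'.symm)
      · exact q2 (by rw [← hgj j, ← hgj j']; exact h'.symm)
  · intro j hjc
    have hdec : L = L.take (j : ℕ) ++ (σ j :: L.drop ((j : ℕ) + 1)) := by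
      conv_lhs => rw [← List.take_append_drop (j : ℕ) L]
      rw [List.drop_eq_getElem_cons (hjlen j)]
      rfl
    obtain ⟨hs1, _⟩ := hstep _ _ _ hdec
    have hQne : L.drop ((j : ℕ) + 1) ≠ [] := by
      intro h
      have := congrArg List.length h
      rw [List.length_drop, hlen] at this
      simp at this
      omega
    have hx := hs1 hQne
    have hKle : (j : ℕ) ≤ k / 2 := le_of_lt j.2
    rcases hx with ⟨h1, h2⟩ | ⟨h1, h2⟩
    · exact Or.inl ⟨(hpe _ hKle _ _).2 h1, fun hh => h2 ((hpe _ hKle _ _).1 hh)⟩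
    · exact Or.inr ⟨(hpe _ hKle _ _).2 h1, fun hh => h2 ((hpe _ hKle _ _).1 hh)⟩
  · intro j hjc
    have hdec : L = L.take (j : ℕ) ++ (σ j :: L.drop ((j : ℕ) + 1)) := by
      conv_lhs => rw [← List.take_append_drop (j : ℕ) L]
      rw [List.drop_eq_getElem_cons (hjlen j)]
      rfl
    obtain ⟨_, hs2⟩ := hstep _ _ _ hdec
    have hQnil : L.drop ((j : ℕ) + 1) = [] :=
      List.drop_eq_nil_of_le (by rw [hlen]; omega)
    obtain ⟨g1, g2, g3⟩ := hs2 hQnil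
    have hKle : (j : ℕ) ≤ k / 2 := le_of_lt j.2
    exact ⟨(hpe _ hKle _ _).2 g1, (hpe _ hKle _ _).2 g2,
      g3.imp ((hpe _ hKle _ _).2) ((hpe _ hKle _ _).2)⟩

end MogamiPaper
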